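/- Let R be a ring, e a nonzero idempotent of R such that R is e-symmetric, J a nonempty subset of R, and I a two-sided ideal of R such that I equals the right annihilator r_R(J) = {x ∈ R : jx = 0 for all j ∈ J}. If e ∉ I, then the quotient ring R/I is right (e + I)-reversible. -/

import Mathlib

/-- If `R` is `e`-symmetric and `I` is a two-sided ideal equal to the right annihilator
of a nonempty subset `J`, with `e ∉ I`, then `R/I` is right `(e + I)`-reversible. -/
theorem quotient_of_e_symmetric_right_reversible
    {R : Type*} [Ring R]
    (e : R) (he : IsIdempotentElem e) (hne : e ≠ 0)
    (hsymm : ∀ a b c : R, a * b * c = 0 → a * c * b * e = 0)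
    (J : Set R) (hJ : J.Nonempty)
    (I : TwoSidedIdeal R) (hI : ∀ x : R, x ∈ I ↔ ∀ j ∈ J, j * x = 0)
    (heI : e ∉ I) :
    ∀ A B : I.ringCon.Quotient, A * B = 0 → B * A * (I.ringCon.mk' e) = 0 := by
  intro A B
  induction A using Quotient.inductionOn' with
  | h a =>
  induction B using Quotient.inductionOn' with
  | h b =>
  intro hab
  have hab' : a * b ∈ I := by
    rw [TwoSidedIdeal.mem_iff]
    exact (RingCon.eq _).1 hab
  have : b * a * e ∈ I := by
    rw [hI] at hab' ⊢
    intro j hj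
    have := hsymm j a b (by rw [mul_assoc]; exact hab' j hj)
    calc j * (b * a * e) = j * b * a * e := by rw [← mul_assoc, ← mul_assoc]
    _ = 0 := this
  change I.ringCon.mk' b * I.ringCon.mk' a * I.ringCon.mk' e = I.ringCon.mk' 0
  rw [← map_mul, ← map_mul]
  exact (RingCon.eq _).2 ((TwoSidedIdeal.mem_iff _ _).1 this)
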